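/- Let a ∈ ℂ, t ∈ ℝ, u ∈ ℂ with |u| = 1, λ > 0, and let (z,ζ,w) ∈ ℂ³. Set δ := 1 − 2i·conj(a)·z − (t + i|a|²)·w + i·conj(a)²·(wζ + iz²) and assume δ ≠ 0. Define (z̃,ζ̃,w̃) := ( λu·(z + aw − conj(a)·(wζ + iz²))/δ , u²·(ζ − 2iaz − ia²w − (t − i|a|²)·(wζ + iz²))/δ , λ²·w/δ ). If wζ + iz² = 0, then w̃ζ̃ + i·z̃² = 0. (That is, the variety V = {wζ + iz² = 0} is invariant under the stability group Aut(𝒳,0).) -/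

import Mathlib

/-- The common denominator `δ` of the stability-group automorphisms of `(𝒳,0)`. -/
noncomputable def deltaAut (a : ℂ) (t : ℝ) (z ζ w : ℂ) : ℂ :=
  1 - 2 * Complex.I * (starRingEnd ℂ) a * z
    - ((t : ℂ) + Complex.I * (Complex.normSq a : ℂ)) * w
    + Complex.I * ((starRingEnd ℂ) a) ^ 2 * (w * ζ + Complex.I * z ^ 2)

/-- First component `z̃` of the stability-group automorphism `ψ`. -/
noncomputable def psiZ (a : ℂ) (t : ℝ) (u : ℂ) (l : ℝ) (z ζ w : ℂ) : ℂ :=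
  (l : ℂ) * u * (z + a * w - (starRingEnd ℂ) a * (w * ζ + Complex.I * z ^ 2)) /
    deltaAut a t z ζ w

/-- Second component `ζ̃` of the stability-group automorphism `ψ`. -/
noncomputable def psiZeta (a : ℂ) (t : ℝ) (u : ℂ) (l : ℝ) (z ζ w : ℂ) : ℂ :=
  u ^ 2 * (ζ - 2 * Complex.I * a * z - Complex.I * a ^ 2 * w
      - ((t : ℂ) - Complex.I * (Complex.normSq a : ℂ)) * (w * ζ + Complex.I * z ^ 2)) /
    deltaAut a t z ζ w

/-- Third component `w̃` of the stability-group automorphism `ψ`. -/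
noncomputable def psiW (a : ℂ) (t : ℝ) (u : ℂ) (l : ℝ) (z ζ w : ℂ) : ℂ :=
  (l : ℂ) ^ 2 * w / deltaAut a t z ζ w

/-- The variety `V = {wζ + iz² = 0}` is invariant under the stability
group `Aut(𝒳,0)`: if `δ ≠ 0` and `wζ + iz² = 0`, then `w̃ζ̃ + i·z̃² = 0` for the image
`(z̃,ζ̃,w̃) = ψ(z,ζ,w)`. -/
theorem V_invariant_under_stability_group (a u : ℂ) (t l : ℝ)
    (hu : ‖u‖ = 1) (hl : 0 < l) (z ζ w : ℂ)
    (hδ : deltaAut a t z ζ w ≠ 0)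
    (hV : w * ζ + Complex.I * z ^ 2 = 0) :
    psiW a t u l z ζ w * psiZeta a t u l z ζ w
      + Complex.I * (psiZ a t u l z ζ w) ^ 2 = 0 := by
  unfold psiW psiZeta psiZ
  have hn : ((Complex.normSq a : ℝ) : ℂ) = (starRingEnd ℂ) a * a := by
    rw [mul_comm, Complex.mul_conj]
  field_simp
  linear_combination ((l:ℂ)^2 * u^2 *
      (1 - ((t:ℂ) - Complex.I * (Complex.normSq a : ℂ)) * w
        - 2 * Complex.I * (starRingEnd ℂ) a * z
        - 2 * Complex.I * (starRingEnd ℂ) a * a * w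
        + Complex.I * ((starRingEnd ℂ) a)^2 * (w * ζ + Complex.I * z ^ 2))) * hV
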